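/- Let α, β, θ > 0 be real numbers. Then the series ∑_{i=1}^∞ α^i / ∏_{j=1}^i (β + jθ) converges, and its sum p₁ satisfies p₁ = (β/θ) · e^{α/θ} · (α/θ)^{−β/θ} · Γ(β/θ, α/θ) − 1, where Γ(s, y) denotes the lower incomplete Gamma function. -/

import Mathlib

open Finset Real MeasureTheory intervalIntegral

noncomputable def cc (s : ℝ) (i : ℕ) : ℝ := (∏ j ∈ Finset.Icc 1 i, (s + j))⁻¹

lemma prod_cc_pos {s : ℝ} (hs : 0 < s) (i : ℕ) : 0 < ∏ j ∈ Finset.Icc 1 i, (s + (j:ℝ)) :=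
  Finset.prod_pos fun j _ => by positivity

lemma cc_pos {s : ℝ} (hs : 0 < s) (i : ℕ) : 0 < cc s i := by
  simpa [cc] using inv_pos.mpr (prod_cc_pos hs i)

lemma cc_zero (s : ℝ) : cc s 0 = 1 := by simp [cc]

lemma cc_succ {s : ℝ} (hs : 0 < s) (i : ℕ) : cc s (i + 1) * (s + (i + 1 : ℝ)) = cc s i := by
  have h := Finset.prod_Icc_succ_top (f := fun j : ℕ => s + (j:ℝ)) (Nat.le_add_left 1 i)
  have h1 : (0:ℝ) < ∏ j ∈ Finset.Icc 1 i, (s + (j:ℝ)) := prod_cc_pos hs i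
  have h2 : (0:ℝ) < s + (i + 1 : ℝ) := by positivity
  simp only [cc]
  rw [h]
  push_cast
  field_simp

lemma cc_le {s : ℝ} (hs : 0 < s) (i : ℕ) : cc s i ≤ ((Nat.factorial i : ℝ))⁻¹ := by
  have hfact : ((Nat.factorial i : ℝ)) = ∏ j ∈ Finset.Icc 1 i, (j : ℝ) := by
    rw [← Nat.cast_prod]
    congr 1
    induction i with
    | zero => simp
    | succ n ih => rw [Finset.prod_Icc_succ_top (Nat.le_add_left 1 n), ← ih, Nat.factorial_succ,
        mul_comm]
  have hle : ((Nat.factorial i : ℝ)) ≤ ∏ j ∈ Finset.Icc 1 i, (s + (j:ℝ)) := by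
    rw [hfact]
    apply Finset.prod_le_prod
    · intro j hj
      have : 1 ≤ j := (Finset.mem_Icc.mp hj).1
      positivity
    · intro j hj
      linarith [hs]
  exact inv_anti₀ (by positivity) hle

noncomputable def ff (s : ℝ) (x : ℝ) : ℝ := ∑' i : ℕ, cc s i * x ^ i

noncomputable def ff' (s : ℝ) (x : ℝ) : ℝ := ∑' i : ℕ, cc s i * ((i : ℝ) * x ^ (i - 1))

lemma summable_u (R : ℝ) :
    Summable (fun i : ℕ => (i : ℝ) * R ^ (i - 1) / (Nat.factorial i : ℝ)) := by
  rw [← summable_nat_add_iff 1]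
  have heq : (fun i : ℕ => ((i + 1 : ℕ) : ℝ) * R ^ (i + 1 - 1) / (Nat.factorial (i + 1) : ℝ))
      = fun i : ℕ => R ^ i / (Nat.factorial i : ℝ) := by
    funext i
    have hf : (Nat.factorial (i + 1) : ℝ) = ((i : ℝ) + 1) * (Nat.factorial i : ℝ) := by
      push_cast [Nat.factorial_succ]; ring
    have h0 : (Nat.factorial i : ℝ) ≠ 0 := by positivity
    rw [hf]
    push_cast
    field_simp
  rw [heq]
  exact Real.summable_pow_div_factorial R

lemma bound_deriv_term {s : ℝ} (hs : 0 < s) {R z : ℝ} (hz : |z| ≤ R) (i : ℕ) :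
    ‖cc s i * ((i : ℝ) * z ^ (i - 1))‖ ≤ (i : ℝ) * R ^ (i - 1) / (Nat.factorial i : ℝ) := by
  have hR : 0 ≤ R := le_trans (abs_nonneg z) hz
  have h1 : ‖cc s i * ((i : ℝ) * z ^ (i - 1))‖ = cc s i * ((i : ℝ) * |z| ^ (i - 1)) := by
    rw [norm_mul, norm_mul, Real.norm_eq_abs, Real.norm_eq_abs, Real.norm_eq_abs,
      abs_of_pos (cc_pos hs i), Nat.abs_cast, abs_pow]
  rw [h1, div_eq_mul_inv, mul_comm ((i:ℝ) * R ^ (i-1)) _]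
  have h2 : (i : ℝ) * |z| ^ (i - 1) ≤ (i : ℝ) * R ^ (i - 1) :=
    mul_le_mul_of_nonneg_left (pow_le_pow_left₀ (abs_nonneg z) hz _) (Nat.cast_nonneg i)
  calc cc s i * ((i : ℝ) * |z| ^ (i - 1))
      ≤ ((Nat.factorial i : ℝ))⁻¹ * ((i : ℝ) * R ^ (i - 1)) := by
        apply mul_le_mul (cc_le hs i) h2 (by positivity) (by positivity)
    _ = (Nat.factorial i : ℝ)⁻¹ * ((i : ℝ) * R ^ (i - 1)) := rfl

lemma summable_ff {s : ℝ} (hs : 0 < s) (x : ℝ) : Summable (fun i : ℕ => cc s i * x ^ i) := by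
  apply Summable.of_norm_bounded (Real.summable_pow_div_factorial |x|)
  intro i
  rw [norm_mul, Real.norm_eq_abs, Real.norm_eq_abs, abs_of_pos (cc_pos hs i), abs_pow,
    div_eq_mul_inv, mul_comm (|x| ^ i) _]
  exact mul_le_mul (cc_le hs i) le_rfl (by positivity) (by positivity)

lemma summable_ff' {s : ℝ} (hs : 0 < s) (x : ℝ) :
    Summable (fun i : ℕ => cc s i * ((i : ℝ) * x ^ (i - 1))) := by
  apply Summable.of_norm_bounded (summable_u |x|)
  exact fun i => bound_deriv_term hs le_rfl i

lemma hasDerivAt_ff {s : ℝ} (hs : 0 < s) (x : ℝ) : HasDerivAt (ff s) (ff' s x) x := by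
  set R := |x| + 1 with hR
  have hRpos : 0 < R := by positivity
  have h0mem : (0:ℝ) ∈ Set.Ioo (-R) R := ⟨by linarith, hRpos⟩
  have hxmem : x ∈ Set.Ioo (-R) R := ⟨by simp [hR]; linarith [neg_abs_le x, abs_nonneg x],
    by simp [hR]; linarith [le_abs_self x]⟩
  exact hasDerivAt_tsum_of_isPreconnected (summable_u R) isOpen_Ioo
    (convex_Ioo (-R) R).isPreconnected
    (fun n y _ => (hasDerivAt_pow n y).const_mul (cc s n))
    (fun n y hy => by
      have hyR : |y| ≤ R := abs_le.mpr ⟨hy.1.le, hy.2.le⟩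
      exact bound_deriv_term hs hyR n)
    h0mem (summable_ff hs 0) hxmem

lemma continuous_ff {s : ℝ} (hs : 0 < s) : Continuous (ff s) :=
  continuous_iff_continuousAt.mpr fun x => (hasDerivAt_ff hs x).continuousAt

lemma ff_ode {s : ℝ} (hs : 0 < s) (x : ℝ) :
    x * ff' s x + (s - x) * ff s x = s := by
  have hF : HasSum (fun i : ℕ => cc s i * x ^ i) (ff s x) := (summable_ff hs x).hasSum
  have hF' : HasSum (fun i : ℕ => cc s i * ((i : ℝ) * x ^ (i - 1))) (ff' s x) :=
    (summable_ff' hs x).hasSum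
  have h1 : HasSum (fun i : ℕ => x * (cc s i * ((i : ℝ) * x ^ (i - 1))))
      (x * ff' s x) := hF'.mul_left x
  have h2 : HasSum (fun i : ℕ => s * (cc s i * x ^ i)) (s * ff s x) := hF.mul_left s
  have h3 := h1.add h2
  have heq : (fun i : ℕ => x * (cc s i * ((i : ℝ) * x ^ (i - 1))) + s * (cc s i * x ^ i))
      = fun i : ℕ => (s + (i : ℝ)) * cc s i * x ^ i := by
    funext i
    cases i with
    | zero => simp
    | succ n =>
      have : x * x ^ (n + 1 - 1) = x ^ (n + 1) := by
        rw [Nat.add_sub_cancel, pow_succ]; ring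
      push_cast
      rw [show n + 1 - 1 = n from rfl] at *
      linear_combination ((n : ℝ) + 1) * cc s (n + 1) * this
  rw [heq] at h3
  have h5 := (hasSum_nat_add_iff' 1).mpr h3
  simp only [Finset.range_one, Finset.sum_singleton, Nat.cast_zero, add_zero, pow_zero,
    mul_one, cc_zero] at h5
  have heq2 : (fun n : ℕ => (s + ((n + 1 : ℕ) : ℝ)) * cc s (n + 1) * x ^ (n + 1))
      = fun n : ℕ => cc s n * x ^ (n + 1) := by
    funext n
    push_cast
    linear_combination x ^ (n + 1) * cc_succ hs n
  rw [heq2] at h5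
  have h6 : HasSum (fun i : ℕ => cc s i * x ^ (i + 1)) (x * ff s x) := by
    have h := hF.mul_left x
    have heq3 : (fun i : ℕ => x * (cc s i * x ^ i)) = fun i : ℕ => cc s i * x ^ (i + 1) := by
      funext i; rw [pow_succ]; ring
    rwa [heq3] at h
  have := h5.unique h6
  linarith

lemma gamma_eq {s : ℝ} (hs : 0 < s) {y : ℝ} (hy : 0 < y) :
    (∫ x in (0:ℝ)..y, x ^ (s - 1) * Real.exp (-x))
      = y ^ s * Real.exp (-y) * ff s y / s := by
  set G : ℝ → ℝ := fun x => x ^ s * Real.exp (-x) * ff s x / s with hG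
  have hcont : ContinuousOn G (Set.Icc 0 y) :=
    ((((Real.continuous_rpow_const hs.le).mul
      (Real.continuous_exp.comp continuous_neg)).mul (continuous_ff hs)).div_const s).continuousOn
  have hderiv : ∀ x ∈ Set.Ioo (0:ℝ) y,
      HasDerivWithinAt G (x ^ (s - 1) * Real.exp (-x)) (Set.Ioi x) x := by
    intro x hx
    have hx0 : 0 < x := hx.1
    have h1 : HasDerivAt (fun t : ℝ => t ^ s) (s * x ^ (s - 1)) x :=
      Real.hasDerivAt_rpow_const (Or.inl hx0.ne')
    have h2 : HasDerivAt (fun t : ℝ => Real.exp (-t)) (-Real.exp (-x)) x := by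
      simpa [Function.comp_def] using (Real.hasDerivAt_exp (-x)).comp x (hasDerivAt_neg x)
    have h3 := hasDerivAt_ff hs x
    have h4 := ((h1.mul h2).mul h3).div_const s
    have hxs : x ^ s = x ^ (s - 1) * x := by
      rw [show s = s - 1 + 1 by ring, Real.rpow_add_one hx0.ne']
      ring_nf
    have hode := ff_ode hs x
    have key : ((s * x ^ (s - 1) * Real.exp (-x) + x ^ s * -Real.exp (-x)) * ff s x
        + x ^ s * Real.exp (-x) * ff' s x) / s = x ^ (s - 1) * Real.exp (-x) := by
      rw [hxs]
      field_simp
      linear_combination hode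
    rw [← key]
    exact h4.hasDerivWithinAt
  have hint : IntervalIntegrable (fun x => x ^ (s - 1) * Real.exp (-x)) volume 0 y := by
    rw [intervalIntegrable_iff_integrableOn_Ioc_of_le hy.le]
    have h1 := Real.GammaIntegral_convergent hs
    have h2 := h1.mono_set (Set.Ioc_subset_Ioi_self : Set.Ioc 0 y ⊆ Set.Ioi 0)
    exact h2.congr_fun (fun x _ => mul_comm _ _) measurableSet_Ioc
  have hFTC := intervalIntegral.integral_eq_sub_of_hasDeriv_right_of_le hy.le hcont hderiv hint
  rw [hFTC, hG]
  simp [Real.zero_rpow hs.ne']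

/-- For `α, β, θ > 0`, the series `∑_{i=1}^∞ α^i / ∏_{j=1}^i (β + jθ)`
converges with sum `(β/θ)·e^{α/θ}·(α/θ)^{-β/θ}·Γ(β/θ, α/θ) - 1`, where
`Γ(s, y) = ∫₀^y x^{s-1} e^{-x} dx` is the lower incomplete Gamma function. -/
theorem stmt_0 (α β θ : ℝ) (hα : 0 < α) (hβ : 0 < β) (hθ : 0 < θ) :
    HasSum (fun i : ℕ => α ^ (i + 1) / ∏ j ∈ Finset.Icc 1 (i + 1), (β + (j : ℝ) * θ))
      (β / θ * Real.exp (α / θ) * (α / θ) ^ (-(β / θ)) *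
          (∫ x in (0:ℝ)..(α / θ), x ^ (β / θ - 1) * Real.exp (-x)) - 1) := by
  set s := β / θ with hsdef
  set y := α / θ with hydef
  have hs : 0 < s := div_pos hβ hθ
  have hy : 0 < y := div_pos hα hθ
  have hterm : (fun i : ℕ => α ^ (i + 1) / ∏ j ∈ Finset.Icc 1 (i + 1), (β + (j : ℝ) * θ))
      = fun i : ℕ => cc s (i + 1) * y ^ (i + 1) := by
    funext i
    have hpc : ∀ j ∈ Finset.Icc 1 (i + 1), (β + (j : ℝ) * θ) = θ * (s + (j : ℝ)) := by
      intro j _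
      rw [hsdef]
      field_simp
    rw [Finset.prod_congr rfl hpc, Finset.prod_mul_distrib, Finset.prod_const, Nat.card_Icc]
    have hα' : α = θ * y := by rw [hydef]; field_simp
    have hppos := prod_cc_pos hs (i + 1)
    rw [hα', mul_pow, cc]
    have hθp : (0:ℝ) < θ ^ (i + 1) := by positivity
    simp only [Nat.add_sub_cancel]
    field_simp
  rw [hterm]
  have hval : β / θ * Real.exp (α / θ) * (α / θ) ^ (-(β / θ)) *
          (∫ x in (0:ℝ)..(α / θ), x ^ (β / θ - 1) * Real.exp (-x)) - 1 = ff s y - 1 := by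
    rw [← hsdef, ← hydef, gamma_eq hs hy, Real.rpow_neg hy.le]
    have h1 : (0:ℝ) < y ^ s := Real.rpow_pos_of_pos hy s
    have h2 : (0:ℝ) < Real.exp y := Real.exp_pos y
    have h3 : Real.exp (-y) = (Real.exp y)⁻¹ := Real.exp_neg y
    rw [h3]
    field_simp
  rw [hval]
  have h := (summable_ff hs y).hasSum
  have h2 := (hasSum_nat_add_iff' (f := fun i : ℕ => cc s i * y ^ i) 1).mpr h
  simpa [cc_zero, ff] using h2
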